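/- Let A be a nontrivial subgroup of a group B, let b ∈ B, and suppose u is a nontrivial element of the free product A * ⟨b⟩_∞ (with ⟨b⟩_∞ infinite cyclic) that maps to 1 in B under the natural evaluation map. Then for any a ∈ A \ {1}, the element [a, u] = a⁻¹u⁻¹au of the free product also maps to 1 in B, and if u does not lie in the free factor A, then [a,u] gives a nontrivial relation among the subgroups A^{b^i}. -/

import Mathlib

open Monoid

section Aux

variable (G : Type*) [Group G]

/-- The free product of ℤ-many copies of `G`. -/
abbrev KK := Monoid.CoprodI (fun _ : ℤ => G)

/-- Shift the indices by `d`. -/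
def shiftHom (d : ℤ) : KK G →* KK G :=
  Monoid.CoprodI.lift (fun i : ℤ => (Monoid.CoprodI.of (M := fun _ : ℤ => G) (i := i + d)))

@[simp] lemma shiftHom_of (d i : ℤ) (a : G) :
    shiftHom G d (Monoid.CoprodI.of (i := i) a) = Monoid.CoprodI.of (i := i + d) a :=
  Monoid.CoprodI.lift_of _ _

/-- The shift automorphism of `KK G` (down by one). -/
def shift : KK G ≃* KK G :=
  MonoidHom.toMulEquiv (shiftHom G (-1)) (shiftHom G 1)
    (Monoid.CoprodI.ext_hom _ _ (fun i => by
      ext a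
      simp [show i + -1 + 1 = i by omega]))
    (Monoid.CoprodI.ext_hom _ _ (fun i => by
      ext a
      simp [show i + 1 + -1 = i by omega]))

@[simp] lemma shift_of (i : ℤ) (a : G) :
    shift G (Monoid.CoprodI.of (i := i) a) = Monoid.CoprodI.of (i := i - 1) a := by
  have h : shift G (Monoid.CoprodI.of (i := i) a)
      = shiftHom G (-1) (Monoid.CoprodI.of (i := i) a) := rfl
  rw [h, shiftHom_of, show i + -1 = i - 1 by omega]

@[simp] lemma shift_symm_of (i : ℤ) (a : G) :
    (shift G).symm (Monoid.CoprodI.of (i := i) a) = Monoid.CoprodI.of (i := i + 1) a := by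
  have h : (shift G).symm (Monoid.CoprodI.of (i := i) a)
      = shiftHom G 1 (Monoid.CoprodI.of (i := i) a) := rfl
  rw [h, shiftHom_of]

lemma shift_zpow_of (m i : ℤ) (a : G) :
    ((shift G : MulAut (KK G)) ^ m) (Monoid.CoprodI.of (i := i) a)
      = Monoid.CoprodI.of (i := i - m) a := by
  induction m using Int.induction_on generalizing i with
  | zero => simp
  | succ n ih =>
      have h : ((shift G : MulAut (KK G)) ^ ((n : ℤ) + 1))
          = ((shift G : MulAut (KK G)) ^ (n : ℤ)) * (shift G : MulAut (KK G)) := by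
        rw [zpow_add, zpow_one]
      rw [h, MulAut.mul_apply, shift_of, ih (i - 1)]
      congr 1
      ring
  | pred n ih =>
      have h : ((shift G : MulAut (KK G)) ^ (-(n : ℤ) - 1))
          = ((shift G : MulAut (KK G)) ^ (-(n : ℤ))) * (shift G : MulAut (KK G))⁻¹ := by
        rw [zpow_sub, zpow_one]
      rw [h, MulAut.mul_apply]
      have h2 : ((shift G : MulAut (KK G))⁻¹) (Monoid.CoprodI.of (i := i) a)
          = (shift G).symm (Monoid.CoprodI.of (i := i) a) := rfl
      rw [h2, shift_symm_of, ih (i + 1)]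
      congr 1
      ring

noncomputable section

/-- The shift action of `Multiplicative ℤ` on `KK G`. -/
def act : Multiplicative ℤ →* MulAut (KK G) := zpowersHom _ (shift G : MulAut (KK G))

lemma act_of (z : Multiplicative ℤ) (i : ℤ) (a : G) :
    act G z (Monoid.CoprodI.of (i := i) a)
      = Monoid.CoprodI.of (i := i - Multiplicative.toAdd z) a := by
  show ((shift G : MulAut (KK G)) ^ (Multiplicative.toAdd z)) _ = _
  exact shift_zpow_of G _ i a

/-- The semidirect product `KK G ⋊ ℤ`. -/
abbrev PP := SemidirectProduct (KK G) (Multiplicative ℤ) (act G)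

/-- The canonical map `G ∗ ℤ →* KK G ⋊ ℤ`. -/
def θ : Monoid.Coprod G (Multiplicative ℤ) →* PP G :=
  Monoid.Coprod.lift
    ((SemidirectProduct.inl : KK G →* PP G).comp
      (Monoid.CoprodI.of (M := fun _ : ℤ => G) (i := (0 : ℤ))))
    (SemidirectProduct.inr)

/-- The generator of the ℤ factor of `G ∗ ℤ`. -/
def s : Monoid.Coprod G (Multiplicative ℤ) :=
  Monoid.Coprod.inr (Multiplicative.ofAdd 1)

lemma inr_eq_s_zpow (z : Multiplicative ℤ) :
    (Monoid.Coprod.inr z : Monoid.Coprod G (Multiplicative ℤ))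
      = (s G) ^ (Multiplicative.toAdd z) := by
  rw [s, ← map_zpow]
  congr 1
  simp [← ofAdd_zsmul]

/-- The map `KK G →* G ∗ ℤ` sending the `i`-th copy into the conjugate `s⁻ⁱ G sⁱ`. -/
def ψ : KK G →* Monoid.Coprod G (Multiplicative ℤ) :=
  Monoid.CoprodI.lift (fun i : ℤ =>
    ((MulAut.conj ((s G) ^ (-i))).toMonoidHom.comp
      (Monoid.Coprod.inl : G →* Monoid.Coprod G (Multiplicative ℤ))))

lemma ψ_of (i : ℤ) (a : G) :
    ψ G (Monoid.CoprodI.of (i := i) a)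
      = (s G) ^ (-i) * Monoid.Coprod.inl a * ((s G) ^ (-i))⁻¹ := by
  rw [ψ, Monoid.CoprodI.lift_of]
  rfl

lemma compat : ∀ z, (ψ G).comp ((act G) z).toMonoidHom
    = (MulAut.conj (Monoid.Coprod.inr z)).toMonoidHom.comp (ψ G) := by
  intro z
  apply Monoid.CoprodI.ext_hom
  intro i
  ext a
  simp only [MonoidHom.comp_apply, MulEquiv.coe_toMonoidHom, MulAut.conj_apply]
  rw [act_of, ψ_of, ψ_of, inr_eq_s_zpow]
  group

/-- The retraction `KK G ⋊ ℤ →* G ∗ ℤ`. -/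
def ρ : PP G →* Monoid.Coprod G (Multiplicative ℤ) :=
  SemidirectProduct.lift (ψ G) Monoid.Coprod.inr (compat G)

lemma ρ_θ : (ρ G).comp (θ G) = MonoidHom.id _ := by
  apply Monoid.Coprod.hom_ext
  · ext a
    simp [θ, ρ, ψ_of]
  · ext z
    simp [θ, ρ]

lemma ρ_θ_apply (x : Monoid.Coprod G (Multiplicative ℤ)) : ρ G (θ G x) = x :=
  DFunLike.congr_fun (ρ_θ G) x

/-- Detection map to the direct product, used to show that elements of distinct
factors are not conjugate. -/
def Φ : KK G →* (ℤ → G) :=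
  Monoid.CoprodI.lift (fun i : ℤ => MonoidHom.mulSingle (fun _ : ℤ => G) i)

lemma Φ_of (i : ℤ) (a : G) :
    Φ G (Monoid.CoprodI.of (i := i) a) = Pi.mulSingle i a :=
  Monoid.CoprodI.lift_of _ _

lemma θ_inl (a : G) : θ G (Monoid.Coprod.inl a)
    = SemidirectProduct.inl (Monoid.CoprodI.of (M := fun _ : ℤ => G) (i := (0:ℤ)) a) :=
  Monoid.Coprod.lift_apply_inl _ _ _

lemma θ_inr (z : Multiplicative ℤ) :
    θ G (Monoid.Coprod.inr z) = SemidirectProduct.inr z :=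
  Monoid.Coprod.lift_apply_inr _ _ _

lemma ρ_inl (k : KK G) : ρ G (SemidirectProduct.inl k) = ψ G k :=
  SemidirectProduct.lift_inl _ _ _ _

variable {G}

/-- `ψ` followed by evaluation in `B` is the lift of the conjugated copies. -/
lemma lift_ψ {B : Type*} [Group B] (f : G →* B) (b : B) (k : KK G) :
    Monoid.Coprod.lift f (zpowersHom B b) (ψ G k)
      = Monoid.CoprodI.lift (fun i : ℤ =>
          ((MulAut.conj (b ^ (-i))).toMonoidHom.comp f : (fun _ : ℤ => G) i →* B)) k := by
  have h : (Monoid.Coprod.lift f (zpowersHom B b)).comp (ψ G)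
      = Monoid.CoprodI.lift (fun i : ℤ =>
          ((MulAut.conj (b ^ (-i))).toMonoidHom.comp f : (fun _ : ℤ => G) i →* B)) := by
    apply Monoid.CoprodI.ext_hom
    intro i
    ext c
    have hs : Monoid.Coprod.lift f (zpowersHom B b) (s G) = b := by
      simp [s]
    simp only [MonoidHom.comp_apply, ψ_of, map_mul, map_zpow, map_inv,
      Monoid.Coprod.lift_apply_inl, hs, Monoid.CoprodI.lift_of,
      MulEquiv.coe_toMonoidHom, MulAut.conj_apply]
    rw [← map_zpow MulAut.conj b (-i), MulAut.conj_apply]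
  exact DFunLike.congr_fun h k

end

end Aux

/-- Let `A` be a nontrivial subgroup of `B`, `b ∈ B`, and let `u` be a nontrivial
element of the free product `A * ⟨b⟩∞` that maps to `1` in `B` under the natural
evaluation map. Then for every `a ∈ A \ {1}` the commutator `[a, u] = a⁻¹u⁻¹au`
also maps to `1` in `B`, and if `u` does not lie in the free factor `A`, then there
is a nontrivial relation among the subgroups `A^{bⁱ}`: the natural map from the free
product of the copies `A^{bⁱ}` to `B` has a nontrivial kernel. -/
theorem commutator_relation_among_conjugates
    {B : Type*} [Group B] (A : Subgroup B) (hA : A ≠ ⊥) (b : B)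
    (u : Monoid.Coprod A (Multiplicative ℤ)) (hu : u ≠ 1)
    (hker : Monoid.Coprod.lift A.subtype (zpowersHom B b) u = 1) :
    ∀ a : A, a ≠ 1 →
      (Monoid.Coprod.lift A.subtype (zpowersHom B b)
          ((Monoid.Coprod.inl a)⁻¹ * u⁻¹ * Monoid.Coprod.inl a * u) = 1) ∧
      ((¬ ∃ a' : A, u = Monoid.Coprod.inl a') →
        ∃ w : Monoid.CoprodI (fun _ : ℤ => A), w ≠ 1 ∧
          Monoid.CoprodI.lift (fun i : ℤ =>
            ((MulAut.conj (b ^ (-i))).toMonoidHom.comp A.subtype :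
              (fun _ : ℤ => A) i →* B)) w = 1) := by
  intro a ha
  have h1 : Monoid.Coprod.lift A.subtype (zpowersHom B b)
      ((Monoid.Coprod.inl a)⁻¹ * u⁻¹ * Monoid.Coprod.inl a * u) = 1 := by
    simp [map_mul, map_inv, hker]
  refine ⟨h1, ?_⟩
  intro _hnot
  set x : Monoid.Coprod ↥A (Multiplicative ℤ)
    := (Monoid.Coprod.inl a)⁻¹ * u⁻¹ * Monoid.Coprod.inl a * u with hxdef
  have hLψ : ∀ k : KK ↥A,
      Monoid.Coprod.lift A.subtype (zpowersHom B b) (ψ ↥A k)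
        = Monoid.CoprodI.lift (fun i : ℤ =>
            ((MulAut.conj (b ^ (-i))).toMonoidHom.comp A.subtype :
              (fun _ : ℤ => ↥A) i →* B)) k :=
    fun k => lift_ψ A.subtype b k
  by_cases hx : x = 1
  · -- `u` commutes with `inl a`
    have hcomm : Monoid.Coprod.inl a * u = u * Monoid.Coprod.inl a := by
      calc Monoid.Coprod.inl a * u
          = (u * Monoid.Coprod.inl a) * x := by rw [hxdef]; group
        _ = u * Monoid.Coprod.inl a := by rw [hx, mul_one]
    have hθc : θ ↥A (Monoid.Coprod.inl a) * θ ↥A u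
        = θ ↥A u * θ ↥A (Monoid.Coprod.inl a) := by
      rw [← map_mul, ← map_mul, hcomm]
    by_cases hz : (θ ↥A u).right = 1
    · -- `θ u` lies in the `CoprodI` part
      have hθu : SemidirectProduct.inl ((θ ↥A u).left) = θ ↥A u := by
        conv_rhs => rw [← SemidirectProduct.inl_left_mul_inr_right (θ ↥A u)]
        rw [hz, map_one, mul_one]
      refine ⟨(θ ↥A u).left, ?_, ?_⟩
      · intro h
        apply hu
        have h0 : θ ↥A u = 1 := by rw [← hθu, h, map_one]
        rw [← ρ_θ_apply ↥A u, h0, map_one]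
      · show Monoid.CoprodI.lift _ ((θ ↥A u).left) = 1
        rw [← hLψ _, ← ρ_inl, hθu, ρ_θ_apply]
        exact hker
    · -- impossible: `of j a` would be conjugate to `of 0 a` with `j ≠ 0`
      exfalso
      have hleft := congrArg SemidirectProduct.left hθc
      rw [SemidirectProduct.mul_left, SemidirectProduct.mul_left, θ_inl,
        SemidirectProduct.left_inl, SemidirectProduct.right_inl, map_one] at hleft
      simp only [MulAut.one_apply] at hleft
      rw [act_of] at hleft
      have hj : (0 : ℤ) - Multiplicative.toAdd ((θ ↥A u).right) ≠ 0 := by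
        simp only [zero_sub, ne_eq, neg_eq_zero]
        intro h
        exact hz (by rw [← ofAdd_toAdd ((θ ↥A u).right), h]; rfl)
      have hΦ := congrArg (Φ ↥A) hleft
      rw [map_mul, map_mul, Φ_of, Φ_of] at hΦ
      have hΦj := congrFun hΦ ((0 : ℤ) - Multiplicative.toAdd ((θ ↥A u).right))
      simp only [Pi.mul_apply] at hΦj
      rw [Pi.mulSingle_eq_of_ne hj, Pi.mulSingle_eq_same, one_mul] at hΦj
      exact ha (left_eq_mul.mp hΦj)
  · -- the commutator is a nontrivial element with trivial image
    have hright : (θ ↥A x).right = 1 := by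
      have h : (θ ↥A x).right = SemidirectProduct.rightHom (θ ↥A x) := rfl
      rw [h, hxdef]
      simp only [map_mul, map_inv, θ_inl]
      rw [SemidirectProduct.rightHom_inl]
      group
    have hθx : SemidirectProduct.inl ((θ ↥A x).left) = θ ↥A x := by
      conv_rhs => rw [← SemidirectProduct.inl_left_mul_inr_right (θ ↥A x)]
      rw [hright, map_one, mul_one]
    refine ⟨(θ ↥A x).left, ?_, ?_⟩
    · intro h
      apply hx
      have h0 : θ ↥A x = 1 := by rw [← hθx, h, map_one]
      rw [← ρ_θ_apply ↥A x, h0, map_one]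
    · show Monoid.CoprodI.lift _ ((θ ↥A x).left) = 1
      rw [← hLψ _, ← ρ_inl, hθx, ρ_θ_apply]
      exact h1
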